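/- Strictly decreasing words over {1,…,n} (columns) represent pairwise distinct elements of the plactic monoid: two strictly decreasing words are Knuth-equivalent only if they are equal. -/

import Mathlib

/-- The Knuth relations on words over the alphabet `Fin n`:
`xzy = zxy` for `x ≤ y < z` and `yxz = yzx` for `x < y ≤ z`. -/
def KnuthRel (n : ℕ) : FreeMonoid (Fin n) → FreeMonoid (Fin n) → Prop := fun a b =>
  (∃ x y z : Fin n, x ≤ y ∧ y < z ∧
      a = FreeMonoid.of x * FreeMonoid.of z * FreeMonoid.of y ∧
      b = FreeMonoid.of z * FreeMonoid.of x * FreeMonoid.of y) ∨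
  (∃ x y z : Fin n, x < y ∧ y ≤ z ∧
      a = FreeMonoid.of y * FreeMonoid.of x * FreeMonoid.of z ∧
      b = FreeMonoid.of y * FreeMonoid.of z * FreeMonoid.of x)

/-- The plactic monoid of rank `n`, presented by generators `Fin n` and the
Knuth relations. -/
def Plactic (n : ℕ) := (conGen (KnuthRel n)).Quotient

instance (n : ℕ) : Monoid (Plactic n) :=
  inferInstanceAs (Monoid (conGen (KnuthRel n)).Quotient)

/-- The canonical projection from the free monoid to the plactic monoid. -/
def Plactic.mk (n : ℕ) : FreeMonoid (Fin n) →* Plactic n := Con.mk' _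

/-- The multiset-of-letters homomorphism. -/
def lettersHom (n : ℕ) : FreeMonoid (Fin n) →* Multiplicative (Multiset (Fin n)) :=
  FreeMonoid.lift (fun x => Multiplicative.ofAdd {x})

lemma lettersHom_of (n : ℕ) (x : Fin n) :
    lettersHom n (FreeMonoid.of x) = Multiplicative.ofAdd {x} := by
  simp [lettersHom]

lemma knuth_preserves_letters (n : ℕ) (a b : FreeMonoid (Fin n))
    (h : conGen (KnuthRel n) a b) : lettersHom n a = lettersHom n b := by
  have : conGen (KnuthRel n) ≤ Con.ker (lettersHom n) := by
    apply Con.conGen_le.mpr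
    rintro a b (⟨x, y, z, _, _, rfl, rfl⟩ | ⟨x, y, z, _, _, rfl, rfl⟩) <;>
      simp only [Con.ker_rel, map_mul, lettersHom_of] <;>
      · apply Multiplicative.toAdd.injective
        simp only [toAdd_mul, toAdd_ofAdd]
        abel
  exact this h

theorem plactic_columns_distinct (n : ℕ) (a b : FreeMonoid (Fin n))
    (ha : (FreeMonoid.toList a).Chain' (· > ·))
    (hb : (FreeMonoid.toList b).Chain' (· > ·))
    (h : conGen (KnuthRel n) a b) : a = b := by
  have hm := knuth_preserves_letters n a b h
  -- lettersHom of a word is the multiset of its letters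
  have key : ∀ w : FreeMonoid (Fin n),
      Multiplicative.toAdd (lettersHom n w) = ↑(FreeMonoid.toList w) := by
    intro w
    induction w using FreeMonoid.recOn with
    | one => simp [lettersHom]
    | of_mul x w ih =>
      rw [map_mul, toAdd_mul, lettersHom_of, ih]
      simp [FreeMonoid.toList_of_mul]
  have hperm : (FreeMonoid.toList a).Perm (FreeMonoid.toList b) := by
    rw [← Multiset.coe_eq_coe, ← key a, ← key b, hm]
  have hsa : (FreeMonoid.toList a).Pairwise (· > ·) :=
    List.isChain_iff_pairwise.mp ha
  have hsb : (FreeMonoid.toList b).Pairwise (· > ·) :=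
    List.isChain_iff_pairwise.mp hb
  have : FreeMonoid.toList a = FreeMonoid.toList b := by
    haveI : IsAntisymm (Fin n) (· > ·) :=
      ⟨fun x y hxy hyx => absurd (lt_trans hyx hxy) (lt_irrefl x)⟩
    exact List.Perm.eq_of_pairwise (fun x y _ _ h1 h2 => antisymm h1 h2) hsa hsb hperm
  exact FreeMonoid.toList.injective this
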